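/- Let $u,u_{\Delta x}$ be bounded continuous functions on $\mathbb{R}$ with $u_x,u_{\Delta x,x}\in L^2(\mathbb{R})$ and $\|u_{\Delta x,x}\|_{L^2}^2\leq F_{\mathrm{ac},\infty}$. Let $y,y_{\Delta x}:\mathbb{R}\to\mathbb{R}$ be nondecreasing surjective maps and define $U=u\circ y$, $U_{\Delta x}=u_{\Delta x}\circ y_{\Delta x}$. Then $\|U-U_{\Delta x}\|_{L^\infty}\leq\|u-u_{\Delta x}\|_{L^\infty}+\sqrt{F_{\mathrm{ac},\infty}}\sqrt{\|y-y_{\Delta x}\|_{L^\infty}}$. -/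

import Mathlib

open MeasureTheory intervalIntegral

lemma myCS (g : ℝ → ℝ) (hint : Integrable (fun z => (g z)^2)) (a b : ℝ) (hab : a ≤ b) :
    |∫ z in a..b, g z| ≤ Real.sqrt (∫ z, (g z)^2) * Real.sqrt (b - a) := by
  by_cases hi : IntervalIntegrable g volume a b
  · have hconj : (2:ℝ).HolderConjugate 2 := Real.holderConjugate_iff.mpr ⟨one_lt_two, by norm_num⟩
    have hmeas : AEStronglyMeasurable g (volume.restrict (Set.Ioc a b)) :=
      (hi.1).aestronglyMeasurable
    have hmem : MemLp g (ENNReal.ofReal 2) (volume.restrict (Set.Ioc a b)) := by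
      rw [show ENNReal.ofReal 2 = 2 by norm_num]
      exact (memLp_two_iff_integrable_sq hmeas).2
        ((hint.restrict (s := Set.Ioc a b)))
    have hone : MemLp (fun _ : ℝ => (1:ℝ)) (ENNReal.ofReal 2)
        (volume.restrict (Set.Ioc a b)) := memLp_const 1
    have key := integral_mul_norm_le_Lp_mul_Lq (μ := volume.restrict (Set.Ioc a b))
      hconj hmem hone
    simp only [norm_one, mul_one] at key
    have h1 : (∫ z in Set.Ioc a b, ‖g z‖ ^ (2:ℝ)) ≤ ∫ z, (g z)^2 := by
      have heq : (∫ z in Set.Ioc a b, ‖g z‖ ^ (2:ℝ)) = ∫ z in Set.Ioc a b, (g z)^2 := by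
        refine setIntegral_congr_fun measurableSet_Ioc fun x _ => ?_
        rw [show ((2:ℝ)) = ((2:ℕ):ℝ) by norm_num, Real.rpow_natCast]
        simp [sq_abs]
      rw [heq]
      exact setIntegral_le_integral hint (Filter.Eventually.of_forall fun x => sq_nonneg _)
    have h2 : (∫ _ in Set.Ioc a b, (1:ℝ) ^ (2:ℝ)) = b - a := by
      simp [Real.volume_Ioc, ENNReal.toReal_ofReal (sub_nonneg.2 hab), hab]
    have hnn : 0 ≤ ∫ z, (g z)^2 := integral_nonneg fun x => sq_nonneg _
    calc |∫ z in a..b, g z| = ‖∫ z in Set.Ioc a b, g z‖ := by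
          rw [integral_of_le hab]; rfl
      _ ≤ ∫ z in Set.Ioc a b, ‖g z‖ := norm_integral_le_integral_norm _
      _ ≤ (∫ z in Set.Ioc a b, ‖g z‖ ^ (2:ℝ)) ^ (1/(2:ℝ)) *
            (∫ _ in Set.Ioc a b, (1:ℝ) ^ (2:ℝ)) ^ (1/(2:ℝ)) := key
      _ ≤ (∫ z, (g z)^2) ^ (1/(2:ℝ)) * (b - a) ^ (1/(2:ℝ)) := by
          rw [h2]
          exact mul_le_mul_of_nonneg_right
            (Real.rpow_le_rpow
              (MeasureTheory.integral_nonneg fun x => Real.rpow_nonneg (norm_nonneg _) _)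
              h1 (by norm_num))
            (Real.rpow_nonneg (sub_nonneg.2 hab) _)
      _ = Real.sqrt (∫ z, (g z)^2) * Real.sqrt (b - a) := by
          rw [Real.sqrt_eq_rpow, Real.sqrt_eq_rpow]
  · rw [intervalIntegral.integral_undef hi]
    simp only [abs_zero]
    positivity

/-- `L^∞`-estimate for the Lagrangian velocities `U = u ∘ y`, `U_Δx = u_Δx ∘ y_Δx`
in terms of the Eulerian error and the error in the characteristics. -/
theorem stmt11 (u uD u' uD' : ℝ → ℝ) (Facinf : ℝ) (h0 : 0 ≤ Facinf)
    (hcont : Continuous u) (hub : ∃ M, ∀ x, |u x| ≤ M)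
    (huDcont : Continuous uD) (huDb : ∃ M, ∀ x, |uD x| ≤ M)
    (hftc : ∀ a b : ℝ, u b - u a = ∫ z in a..b, u' z)
    (hftcD : ∀ a b : ℝ, uD b - uD a = ∫ z in a..b, uD' z)
    (hint : Integrable (fun z => (u' z)^2))
    (hintD : Integrable (fun z => (uD' z)^2))
    (hED : (∫ z, (uD' z)^2) ≤ Facinf)
    (y yD : ℝ → ℝ)
    (hy : Monotone y) (hys : Function.Surjective y)
    (hyD : Monotone yD) (hyDs : Function.Surjective yD)
    (Cu Cy : ℝ)
    (hCu : ∀ x, |u x - uD x| ≤ Cu)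
    (hCy : ∀ ξ, |y ξ - yD ξ| ≤ Cy) :
    ∀ ξ, |u (y ξ) - uD (yD ξ)| ≤ Cu + Real.sqrt Facinf * Real.sqrt Cy := by

  intro ξ
  have hFickey : ∀ a b : ℝ, |a - b| ≤ Cy → |∫ z in a..b, uD' z| ≤
      Real.sqrt Facinf * Real.sqrt Cy := by
    intro a b hab
    have step : ∀ c d : ℝ, c ≤ d → d - c ≤ Cy → |∫ z in c..d, uD' z| ≤
        Real.sqrt Facinf * Real.sqrt Cy := by
      intro c d hcd hdc
      refine (myCS uD' hintD c d hcd).trans ?_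
      have h1 : Real.sqrt (∫ z, (uD' z)^2) ≤ Real.sqrt Facinf := Real.sqrt_le_sqrt hED
      have h2 : Real.sqrt (d - c) ≤ Real.sqrt Cy := Real.sqrt_le_sqrt hdc
      exact mul_le_mul h1 h2 (Real.sqrt_nonneg _) (Real.sqrt_nonneg _)
    rcases le_total a b with h | h
    · exact step a b h (by cases abs_le.1 hab; linarith)
    · rw [intervalIntegral.integral_symm, abs_neg]
      exact step b a h (by cases abs_le.1 hab; linarith)
  calc |u (y ξ) - uD (yD ξ)|
      ≤ |u (y ξ) - uD (y ξ)| + |uD (y ξ) - uD (yD ξ)| := abs_sub_le _ _ _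
    _ ≤ Cu + Real.sqrt Facinf * Real.sqrt Cy := by
        refine add_le_add (hCu _) ?_
        have : uD (yD ξ) - uD (y ξ) = ∫ z in y ξ..yD ξ, uD' z := hftcD _ _
        rw [abs_sub_comm, this]
        exact hFickey _ _ (hCy ξ)
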